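/- Let P, Q be primitive vectors in ℤ³ and let d be the gcd of the absolute values of the 2×2 minors of the 3×2 matrix with columns P and Q. If d > 1, then there exists a unique integer d₁ with 1 ≤ d₁ < d such that (P + d₁·Q)/d is an integral vector, i.e., d divides every coordinate of P + d₁·Q. -/

import Mathlib

/-- gcd of the absolute values of the three 2×2 minors of the 3×2 matrix
with columns `(p₁,p₂,p₃)` and `(q₁,q₂,q₃)`. -/
def mg (p₁ p₂ p₃ q₁ q₂ q₃ : ℤ) : ℕ :=
  Int.gcd (p₁ * q₂ - p₂ * q₁) (Int.gcd (p₁ * q₃ - p₃ * q₁) (p₂ * q₃ - p₃ * q₂))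

lemma bezout3 (x y z : ℤ) (h : Int.gcd x (Int.gcd y z) = 1) :
    ∃ a b c : ℤ, a * x + b * y + c * z = 1 := by
  have h1 : ((Int.gcd y z : ℤ)) = y * Int.gcdA y z + z * Int.gcdB y z :=
    Int.gcd_eq_gcd_ab y z
  have h2 : ((Int.gcd x ((Int.gcd y z : ℤ)) : ℤ)) =
      x * Int.gcdA x ((Int.gcd y z : ℤ)) + ((Int.gcd y z : ℤ)) * Int.gcdB x ((Int.gcd y z : ℤ)) :=
    Int.gcd_eq_gcd_ab x ((Int.gcd y z : ℤ))
  rw [h] at h2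
  refine ⟨Int.gcdA x ((Int.gcd y z : ℤ)),
    Int.gcdA y z * Int.gcdB x ((Int.gcd y z : ℤ)),
    Int.gcdB y z * Int.gcdB x ((Int.gcd y z : ℤ)), ?_⟩
  push_cast at h2
  linear_combination (-1 : ℤ) * h2 + (-(Int.gcdB x ((Int.gcd y z : ℤ)))) * h1

theorem stmt0 (p₁ p₂ p₃ q₁ q₂ q₃ : ℤ)
    (hP : Int.gcd p₁ (Int.gcd p₂ p₃) = 1)
    (hQ : Int.gcd q₁ (Int.gcd q₂ q₃) = 1)
    (d : ℤ) (hd : d = (mg p₁ p₂ p₃ q₁ q₂ q₃ : ℤ)) (hd1 : 1 < d) :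
    ∃! d₁ : ℤ, (1 ≤ d₁ ∧ d₁ < d) ∧
      d ∣ p₁ + d₁ * q₁ ∧ d ∣ p₂ + d₁ * q₂ ∧ d ∣ p₃ + d₁ * q₃ := by
  have hd0 : 0 < d := lt_trans one_pos hd1
  -- d divides the minors
  have hm12 : d ∣ p₁ * q₂ - p₂ * q₁ := by
    rw [hd]; exact_mod_cast (Int.gcd_dvd_left _ _)
  have hm13 : d ∣ p₁ * q₃ - p₃ * q₁ := by
    rw [hd]
    exact dvd_trans (by exact_mod_cast (Int.gcd_dvd_right _ _)) (by exact_mod_cast (Int.gcd_dvd_left _ _))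
  have hm23 : d ∣ p₂ * q₃ - p₃ * q₂ := by
    rw [hd]
    exact dvd_trans (by exact_mod_cast (Int.gcd_dvd_right _ _)) (by exact_mod_cast (Int.gcd_dvd_right _ _))
  obtain ⟨a, b, c, habc⟩ := bezout3 q₁ q₂ q₃ hQ
  obtain ⟨a', b', c', habc'⟩ := bezout3 p₁ p₂ p₃ hP
  set t₀ : ℤ := -(a * p₁ + b * p₂ + c * p₃) with ht₀
  have h1 : d ∣ p₁ + t₀ * q₁ := by
    have : p₁ + t₀ * q₁ = b * (p₁ * q₂ - p₂ * q₁) + c * (p₁ * q₃ - p₃ * q₁) := by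
      rw [ht₀]; linear_combination (-p₁) * habc
    rw [this]; exact dvd_add (Dvd.dvd.mul_left hm12 b) (Dvd.dvd.mul_left hm13 c)
  have h2 : d ∣ p₂ + t₀ * q₂ := by
    have : p₂ + t₀ * q₂ = (-a) * (p₁ * q₂ - p₂ * q₁) + c * (p₂ * q₃ - p₃ * q₂) := by
      rw [ht₀]; linear_combination (-p₂) * habc
    rw [this]; exact dvd_add (Dvd.dvd.mul_left hm12 (-a)) (Dvd.dvd.mul_left hm23 c)
  have h3 : d ∣ p₃ + t₀ * q₃ := by
    have : p₃ + t₀ * q₃ = (-a) * (p₁ * q₃ - p₃ * q₁) + (-b) * (p₂ * q₃ - p₃ * q₂) := by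
      rw [ht₀]; linear_combination (-p₃) * habc
    rw [this]; exact dvd_add (Dvd.dvd.mul_left hm13 (-a)) (Dvd.dvd.mul_left hm23 (-b))
  set d₁ : ℤ := t₀ % d with hd₁
  have hmod : d ∣ d₁ - t₀ := by
    rw [hd₁, Int.emod_def]; exact ⟨-(t₀ / d), by ring⟩
  have key : ∀ x y, d ∣ x + t₀ * y → d ∣ x + d₁ * y := by
    intro x y h
    have : x + d₁ * y = (x + t₀ * y) + (d₁ - t₀) * y := by ring
    rw [this]; exact dvd_add h (Dvd.dvd.mul_right hmod y)
  have g1 := key _ _ h1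
  have g2 := key _ _ h2
  have g3 := key _ _ h3
  have hlb : 0 ≤ d₁ := Int.emod_nonneg t₀ (ne_of_gt hd0)
  have hub : d₁ < d := Int.emod_lt_of_pos t₀ hd0
  have hne : d₁ ≠ 0 := by
    intro h0
    rw [h0] at g1 g2 g3
    simp only [zero_mul, add_zero] at g1 g2 g3
    have : d ∣ 1 := by
      have : d ∣ a' * p₁ + b' * p₂ + c' * p₃ :=
        dvd_add (dvd_add (g1.mul_left a') (g2.mul_left b')) (g3.mul_left c')
      rwa [habc'] at this
    have := Int.le_of_dvd one_pos this
    omega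
  refine ⟨d₁, ⟨⟨by omega, hub⟩, g1, g2, g3⟩, ?_⟩
  rintro e ⟨⟨he1, he2⟩, k1, k2, k3⟩
  have hq1 : d ∣ (e - d₁) * q₁ := by
    have : (e - d₁) * q₁ = (p₁ + e * q₁) - (p₁ + d₁ * q₁) := by ring
    rw [this]; exact dvd_sub k1 g1
  have hq2 : d ∣ (e - d₁) * q₂ := by
    have : (e - d₁) * q₂ = (p₂ + e * q₂) - (p₂ + d₁ * q₂) := by ring
    rw [this]; exact dvd_sub k2 g2
  have hq3 : d ∣ (e - d₁) * q₃ := by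
    have : (e - d₁) * q₃ = (p₃ + e * q₃) - (p₃ + d₁ * q₃) := by ring
    rw [this]; exact dvd_sub k3 g3
  have hdvd : d ∣ e - d₁ := by
    have : d ∣ a * ((e - d₁) * q₁) + b * ((e - d₁) * q₂) + c * ((e - d₁) * q₃) :=
      dvd_add (dvd_add (hq1.mul_left a) (hq2.mul_left b)) (hq3.mul_left c)
    have heq : a * ((e - d₁) * q₁) + b * ((e - d₁) * q₂) + c * ((e - d₁) * q₃)
        = (e - d₁) * (a * q₁ + b * q₂ + c * q₃) := by ring
    rw [heq, habc, mul_one] at this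
    exact this
  obtain ⟨k, hk⟩ := hdvd
  rcases lt_trichotomy k 0 with hneg | h0 | hpos
  · nlinarith
  · rw [h0, mul_zero] at hk; omega
  · nlinarith
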